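/- arXiv:1211.6483 — 2 statements merged into one kernel-verified Lean document; each statement's English description precedes it below -/
import Mathlib

section
/- Rules (1)(c) and (2)(c) are inverses: if S is a face sequence satisfying subcondition (c) of rule (1) and S′ is the result of applying rule (1) to S, then S′ is a face sequence satisfying subcondition (c) of rule (2) and applying rule (2) to S′ returns S; conversely, if T is a face sequence satisfying subcondition (c) of rule (2) and T′ is the result of applying rule (2) to T, then T′ satisfies subcondition (c) of rule (1) and applying rule (1) to T′ returns T. -/
set_option linter.unusedVariables false

/-- The alphabet `{0, 1, ∗}` for face sequences. -/
inductive Letter : Type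
  | zero
  | one
  | star
  deriving DecidableEq

/-- A sequence of length `n` over the alphabet `{0, 1, ∗}`. -/
abbrev FSeq (n : ℕ) := Fin n → Letter

/-- `S(1)`, the number of `1`'s in `S`. -/
def count1 {n : ℕ} (S : FSeq n) : ℕ := (Finset.univ.filter fun i => S i = Letter.one).card

/-- `S(0)`, the number of `0`'s in `S`. -/
def count0 {n : ℕ} (S : FSeq n) : ℕ := (Finset.univ.filter fun i => S i = Letter.zero).card

/-- The number of `∗`'s in `S`. -/
def countStar {n : ℕ} (S : FSeq n) : ℕ := (Finset.univ.filter fun i => S i = Letter.star).card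

/-- A face sequence: either no `∗` and exactly `k` ones, or at most `k-1` ones and
(#ones) + (#stars) ≥ `k+1`. -/
def FaceSeq {n : ℕ} (k : ℕ) (S : FSeq n) : Prop :=
  (countStar S = 0 ∧ count1 S = k) ∨ (count1 S + 1 ≤ k ∧ k + 1 ≤ count1 S + countStar S)

/-- `v₀`, the sequence of `k` ones followed by `n - k` zeros. -/
def v0seq (n k : ℕ) : FSeq n := fun i => if (i : ℕ) < k then Letter.one else Letter.zero

/-- `S` contains at least one `∗`. -/
def hasStar {n : ℕ} (S : FSeq n) : Prop := ∃ i, S i = Letter.star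

/-- There is a `1` to the right of the rightmost `∗` (in particular `S` contains a `∗`). -/
def OneRight {n : ℕ} (S : FSeq n) : Prop :=
  hasStar S ∧ ∃ i, S i = Letter.one ∧ ∀ j, i < j → S j ≠ Letter.star

/-- There is no `1` to the right of the rightmost `∗` (and `S` contains a `∗`). -/
def NoOneRight {n : ℕ} (S : FSeq n) : Prop :=
  hasStar S ∧ ∀ i, S i = Letter.one → ∃ j, i < j ∧ S j = Letter.star

/-- There is a `0` to the left of the leftmost `∗` (in particular `S` contains a `∗`). -/
def ZeroLeft {n : ℕ} (S : FSeq n) : Prop :=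
  hasStar S ∧ ∃ i, S i = Letter.zero ∧ ∀ j, j < i → S j ≠ Letter.star

/-- There is no `0` to the left of the leftmost `∗` (and `S` contains a `∗`). -/
def NoZeroLeft {n : ℕ} (S : FSeq n) : Prop :=
  hasStar S ∧ ∀ i, S i = Letter.zero → ∃ j, j < i ∧ S j = Letter.star

/-- `i` is the position of the rightmost `1` of `S`. -/
def IsRightmostOne {n : ℕ} (S : FSeq n) (i : Fin n) : Prop :=
  S i = Letter.one ∧ ∀ j, i < j → S j ≠ Letter.one

/-- `i` is the position of the rightmost `∗` of `S`. -/
def IsRightmostStar {n : ℕ} (S : FSeq n) (i : Fin n) : Prop :=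
  S i = Letter.star ∧ ∀ j, i < j → S j ≠ Letter.star

/-- `i` is the position of the leftmost `0` of `S`. -/
def IsLeftmostZero {n : ℕ} (S : FSeq n) (i : Fin n) : Prop :=
  S i = Letter.zero ∧ ∀ j, j < i → S j ≠ Letter.zero

/-- `i` is the position of the leftmost `∗` of `S`. -/
def IsLeftmostStar {n : ℕ} (S : FSeq n) (i : Fin n) : Prop :=
  S i = Letter.star ∧ ∀ j, j < i → S j ≠ Letter.star

/-- Condition of rule (1), subcondition (a). -/
def Cond1a {n : ℕ} (k m0 m1 : ℕ) (S : FSeq n) : Prop :=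
  count1 S + 1 ≤ k ∧ OneRight S ∧ count1 S ≠ m1

/-- Condition of rule (1), subcondition (b). -/
def Cond1b {n : ℕ} (k m0 m1 : ℕ) (S : FSeq n) : Prop :=
  count1 S + 1 ≤ k ∧ OneRight S ∧ count1 S = m1 ∧ m0 < count0 S

/-- Condition of rule (1), subcondition (c): no `0` to the left of the leftmost `∗`. -/
def Cond1c {n : ℕ} (k m0 m1 : ℕ) (S : FSeq n) : Prop :=
  count1 S + 1 ≤ k ∧ OneRight S ∧ count1 S = m1 ∧ count0 S = m0 ∧ NoZeroLeft S

/-- Condition of rule (2), subcondition (a): here `count1 S + 1 ≠ m1` encodes `S(1) ≠ m₁ - 1`. -/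
def Cond2a {n : ℕ} (k m0 m1 : ℕ) (S : FSeq n) : Prop :=
  count1 S + 2 ≤ k ∧ NoOneRight S ∧ count1 S + 1 ≠ m1

/-- Condition of rule (2), subcondition (b). -/
def Cond2b {n : ℕ} (k m0 m1 : ℕ) (S : FSeq n) : Prop :=
  count1 S + 2 ≤ k ∧ NoOneRight S ∧ count1 S + 1 = m1 ∧ m0 < count0 S

/-- Condition of rule (2), subcondition (c). -/
def Cond2c {n : ℕ} (k m0 m1 : ℕ) (S : FSeq n) : Prop :=
  count1 S + 2 ≤ k ∧ NoOneRight S ∧ count1 S + 1 = m1 ∧ count0 S = m0 ∧ NoZeroLeft S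

/-- `S` is of type 1 (satisfies the condition of rule (1)). -/
def Type1 {n : ℕ} (k m0 m1 : ℕ) (S : FSeq n) : Prop :=
  Cond1a k m0 m1 S ∨ Cond1b k m0 m1 S ∨ Cond1c k m0 m1 S

/-- `S` is of type 2 (satisfies the condition of rule (2)). -/
def Type2 {n : ℕ} (k m0 m1 : ℕ) (S : FSeq n) : Prop :=
  Cond2a k m0 m1 S ∨ Cond2b k m0 m1 S ∨ Cond2c k m0 m1 S

/-- `S` is of type 3: `S(1) = k-1`, `S(0) ≤ n-k-1`, no `1` right of the rightmost `∗`,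
a `0` left of the leftmost `∗`. -/
def Type3 {n : ℕ} (k : ℕ) (S : FSeq n) : Prop :=
  count1 S + 1 = k ∧ count0 S + k + 1 ≤ n ∧ NoOneRight S ∧ ZeroLeft S

/-- `S` is of type 4: `S(1) = k-1`, `S(0) ≤ n-k-2`, no `1` right of the rightmost `∗`,
no `0` left of the leftmost `∗`. -/
def Type4 {n : ℕ} (k : ℕ) (S : FSeq n) : Prop :=
  count1 S + 1 = k ∧ count0 S + k + 2 ≤ n ∧ NoOneRight S ∧ NoZeroLeft S

/-- `S` is of type 5: `S(1) = m₁`, `S(0) ≤ m₀`, a `1` right of the rightmost `∗`,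
a `0` left of the leftmost `∗`. -/
def Type5 {n : ℕ} (m0 m1 : ℕ) (S : FSeq n) : Prop :=
  count1 S = m1 ∧ count0 S ≤ m0 ∧ OneRight S ∧ ZeroLeft S

/-- `S` is of type 6: `S(1) = m₁`, `S(0) < m₀`, a `1` right of the rightmost `∗`,
no `0` left of the leftmost `∗`. -/
def Type6 {n : ℕ} (m0 m1 : ℕ) (S : FSeq n) : Prop :=
  count1 S = m1 ∧ count0 S < m0 ∧ OneRight S ∧ NoZeroLeft S

/-- `S` is of type 7: `S(1) = m₁-1`, `S(0) ≤ m₀`, no `1` right of the rightmost `∗`,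
a `0` left of the leftmost `∗`. -/
def Type7 {n : ℕ} (m0 m1 : ℕ) (S : FSeq n) : Prop :=
  count1 S + 1 = m1 ∧ count0 S ≤ m0 ∧ NoOneRight S ∧ ZeroLeft S

/-- `S` is of type 8: `S(1) = m₁-1`, `S(0) < m₀`, no `1` right of the rightmost `∗`,
no `0` left of the leftmost `∗`. -/
def Type8 {n : ℕ} (m0 m1 : ℕ) (S : FSeq n) : Prop :=
  count1 S + 1 = m1 ∧ count0 S < m0 ∧ NoOneRight S ∧ NoZeroLeft S

/-- `S` is of type 9: `S(1) = k`, `S(0) = n-k`, and `S ≠ v₀`. -/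
def Type9 {n : ℕ} (k : ℕ) (S : FSeq n) : Prop :=
  count1 S = k ∧ count0 S + k = n ∧ S ≠ v0seq n k

/-- `S` is of type 10: `S(1) = k-1`, `S(0) = n-k-1`, no `1` right of the rightmost `∗`,
no `0` left of the leftmost `∗`. -/
def Type10 {n : ℕ} (k : ℕ) (S : FSeq n) : Prop :=
  count1 S + 1 = k ∧ count0 S + k + 1 = n ∧ NoOneRight S ∧ NoZeroLeft S

/-- `S` is of type `i` for `1 ≤ i ≤ 10` (and of no type otherwise). -/
def OfType {n : ℕ} (k m0 m1 : ℕ) (i : ℕ) (S : FSeq n) : Prop :=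
  match i with
  | 1 => Type1 k m0 m1 S
  | 2 => Type2 k m0 m1 S
  | 3 => Type3 k S
  | 4 => Type4 k S
  | 5 => Type5 m0 m1 S
  | 6 => Type6 m0 m1 S
  | 7 => Type7 m0 m1 S
  | 8 => Type8 m0 m1 S
  | 9 => Type9 k S
  | 10 => Type10 k S
  | _ => False

/-- The replacement of rule (1): replace the rightmost `1` with `∗`. -/
def Apply1 {n : ℕ} (S S' : FSeq n) : Prop :=
  ∃ i, IsRightmostOne S i ∧ S' = Function.update S i Letter.star

/-- The replacement of rule (2): replace the rightmost `∗` with `1`. -/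
def Apply2 {n : ℕ} (S S' : FSeq n) : Prop :=
  ∃ i, IsRightmostStar S i ∧ S' = Function.update S i Letter.one

/-- The replacement of rules (3), (5) and (7): replace the leftmost `0` with `∗`. -/
def Apply3 {n : ℕ} (S S' : FSeq n) : Prop :=
  ∃ i, IsLeftmostZero S i ∧ S' = Function.update S i Letter.star

/-- The replacement of rules (4), (6) and (8): replace the leftmost `∗` with `0`. -/
def Apply4 {n : ℕ} (S S' : FSeq n) : Prop :=
  ∃ i, IsLeftmostStar S i ∧ S' = Function.update S i Letter.zero

/-- The replacement of rule (9): replace the leftmost `0` and the rightmost `1` each with `∗`. -/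
def Apply9 {n : ℕ} (S S' : FSeq n) : Prop :=
  ∃ i j, IsLeftmostZero S i ∧ IsRightmostOne S j ∧
    S' = Function.update (Function.update S i Letter.star) j Letter.star

/-- The replacement of rule (10): replace the leftmost `∗` with `0` and the other `∗` with `1`. -/
def Apply10 {n : ℕ} (S S' : FSeq n) : Prop :=
  ∃ i j, IsLeftmostStar S i ∧ IsRightmostStar S j ∧ i ≠ j ∧
    S' = Function.update (Function.update S i Letter.zero) j Letter.one

/-- The matching `V` on face sequences: a face sequence `S` of type 1, 3, 5, 7 or 9 is
matched with the result `S'` of applying the corresponding rule to it. -/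
def Vmatch {n : ℕ} (k m0 m1 : ℕ) (S S' : FSeq n) : Prop :=
  FaceSeq k S ∧
    ((Type1 k m0 m1 S ∧ Apply1 S S') ∨
     (Type3 k S ∧ Apply3 S S') ∨
     (Type5 m0 m1 S ∧ Apply3 S S') ∨
     (Type7 m0 m1 S ∧ Apply3 S S') ∨
     (Type9 k S ∧ Apply9 S S'))

/-- The vertex set of a face sequence `S`: the vertex sequences (0/1-sequences with
exactly `k` ones) agreeing with `S` wherever `S` is not `∗`. -/
def VertexSet {n : ℕ} (k : ℕ) (S : FSeq n) : Set (FSeq n) :=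
  {v | (∀ i, v i ≠ Letter.star) ∧ count1 v = k ∧ ∀ i, S i ≠ Letter.star → v i = S i}

/-- The dimension of the face `F(S)`. -/
def fdim {n : ℕ} (S : FSeq n) : ℕ :=
  if countStar S = 0 then 0 else countStar S - 1

/-- `T` is a codimension-1 face of `S`. -/
def Codim1 {n : ℕ} (k : ℕ) (T S : FSeq n) : Prop :=
  VertexSet k T ⊂ VertexSet k S ∧ fdim T + 1 = fdim S

/-- A (nontrivial) `V`-path `a₀, b₀, a₁, b₁, …, b_r, a_{r+1}` of face sequences. -/
structure VPath (n k m0 m1 r : ℕ) where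
  a : Fin (r + 2) → FSeq n
  b : Fin (r + 1) → FSeq n
  face_a : ∀ i, FaceSeq k (a i)
  face_b : ∀ i, FaceSeq k (b i)
  mem : ∀ i : Fin (r + 1), Vmatch k m0 m1 (a i.castSucc) (b i)
  codim_left : ∀ i : Fin (r + 1), Codim1 k (a i.castSucc) (b i)
  codim_right : ∀ i : Fin (r + 1), Codim1 k (a i.succ) (b i)
  step_ne : ∀ i : Fin (r + 1), a i.castSucc ≠ a i.succ


section Helpers

lemma filter_update_card {n : ℕ} (S : FSeq n) (i : Fin n) (b L : Letter) :
    (Finset.univ.filter fun j => Function.update S i b j = L).card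
      + (if S i = L then 1 else 0)
    = (Finset.univ.filter fun j => S j = L).card + (if b = L then 1 else 0) := by
  classical
  rw [Finset.card_filter, Finset.card_filter,
    Fintype.sum_eq_add_sum_compl i,
    Fintype.sum_eq_add_sum_compl i (fun j => if S j = L then (1:ℕ) else 0)]
  have h : ∑ j ∈ ({i}ᶜ : Finset (Fin n)), (if Function.update S i b j = L then (1:ℕ) else 0)
      = ∑ j ∈ ({i}ᶜ : Finset (Fin n)), (if S j = L then (1:ℕ) else 0) := by
    refine Finset.sum_congr rfl fun j hj => ?_
    rw [Function.update_of_ne (by simpa using hj)]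
  rw [h, Function.update_self]
  omega

lemma count1_update {n : ℕ} (S : FSeq n) (i : Fin n) (b : Letter) :
    count1 (Function.update S i b) + (if S i = Letter.one then 1 else 0)
      = count1 S + (if b = Letter.one then 1 else 0) :=
  filter_update_card S i b Letter.one

lemma count0_update {n : ℕ} (S : FSeq n) (i : Fin n) (b : Letter) :
    count0 (Function.update S i b) + (if S i = Letter.zero then 1 else 0)
      = count0 S + (if b = Letter.zero then 1 else 0) :=
  filter_update_card S i b Letter.zero

lemma countStar_update {n : ℕ} (S : FSeq n) (i : Fin n) (b : Letter) :
    countStar (Function.update S i b) + (if S i = Letter.star then 1 else 0)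
      = countStar S + (if b = Letter.star then 1 else 0) :=
  filter_update_card S i b Letter.star

lemma hasStar_pos {n : ℕ} {S : FSeq n} (h : hasStar S) : 1 ≤ countStar S := by
  obtain ⟨i, hi⟩ := h
  have : i ∈ Finset.univ.filter fun j => S j = Letter.star := by simp [hi]
  exact Finset.card_pos.mpr ⟨i, this⟩

end Helpers

/-- **Rules (1)(c) and (2)(c) are inverses of each other.** -/
theorem rule1c_rule2c_inverse (n k m0 m1 : ℕ) (hk1 : 1 ≤ k) (hk2 : k ≤ n - 1)
    (hm0 : m0 + k + 1 ≤ n) (hm1l : 1 ≤ m1) (hm1u : m1 + 1 ≤ k) :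
    (∀ S S' : FSeq n, FaceSeq k S → Cond1c k m0 m1 S → Apply1 S S' →
      FaceSeq k S' ∧ Cond2c k m0 m1 S' ∧ Apply2 S' S) ∧
    (∀ T T' : FSeq n, FaceSeq k T → Cond2c k m0 m1 T → Apply2 T T' →
      FaceSeq k T' ∧ Cond1c k m0 m1 T' ∧ Apply1 T' T) := by
  constructor
  · -- forward direction: rule (1)(c) then rule (2)(c)
    rintro S S' hF ⟨hc1, hOR, hm1eq, hm0eq, hNZL⟩ ⟨i, ⟨hi1, hiR⟩, rfl⟩
    obtain ⟨hstar, j0, hj0one, hj0⟩ := hOR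
    have hj0le : j0 ≤ i := by
      by_contra h
      exact hiR j0 (lt_of_not_ge h) hj0one
    have hRstar : ∀ l, i < l → S l ≠ Letter.star :=
      fun l hl => hj0 l (lt_of_le_of_lt hj0le hl)
    -- counts
    have h1 := count1_update S i Letter.star
    have h0 := count0_update S i Letter.star
    have hs := countStar_update S i Letter.star
    simp [hi1] at h1 h0 hs
    have hss : 1 ≤ countStar S := hasStar_pos hstar
    have hF2 : count1 S + 1 ≤ k ∧ k + 1 ≤ count1 S + countStar S := by
      rcases hF with ⟨hz, _⟩ | h
      · omega
      · exact h
    have hSi' : Function.update S i Letter.star i = Letter.star :=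
      Function.update_self i Letter.star S
    have hstar' : hasStar (Function.update S i Letter.star) := ⟨i, hSi'⟩
    refine ⟨Or.inr ⟨by omega, by omega⟩, ⟨by omega, ?_, by omega, by omega, ?_⟩, ?_⟩
    · -- NoOneRight S'
      refine ⟨hstar', fun l hl => ?_⟩
      have hlne : l ≠ i := by
        intro h; rw [h, hSi'] at hl; exact Letter.noConfusion hl
      rw [Function.update_of_ne hlne] at hl
      have hlt : l < i := by
        rcases lt_trichotomy l i with h | h | h
        · exact h
        · exact absurd h hlne
        · exact absurd hl (hiR l h)
      exact ⟨i, hlt, hSi'⟩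
    · -- NoZeroLeft S'
      refine ⟨hstar', fun l hl => ?_⟩
      have hlne : l ≠ i := by
        intro h; rw [h, hSi'] at hl; exact Letter.noConfusion hl
      rw [Function.update_of_ne hlne] at hl
      obtain ⟨m, hm, hms⟩ := hNZL.2 l hl
      have hmne : m ≠ i := by
        intro h; rw [h, hi1] at hms; exact Letter.noConfusion hms
      exact ⟨m, hm, by rw [Function.update_of_ne hmne]; exact hms⟩
    · -- Apply2 S' S
      refine ⟨i, ⟨hSi', fun l hl => ?_⟩, ?_⟩
      · rw [Function.update_of_ne (Fin.ne_of_gt hl)]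
        exact hRstar l hl
      · rw [Function.update_idem, ← hi1, Function.update_eq_self]
  · -- backward direction: rule (2)(c) then rule (1)(c)
    rintro T T' hF ⟨hc2, hNOR, hm1eq, hm0eq, hNZL⟩ ⟨i, ⟨hi_star, hiR⟩, rfl⟩
    have hstar := hNOR.1
    -- counts
    have h1 := count1_update T i Letter.one
    have h0 := count0_update T i Letter.one
    have hs := countStar_update T i Letter.one
    simp [hi_star] at h1 h0 hs
    have hss : 1 ≤ countStar T := hasStar_pos hstar
    have hF2 : count1 T + 1 ≤ k ∧ k + 1 ≤ count1 T + countStar T := by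
      rcases hF with ⟨hz, _⟩ | h
      · omega
      · exact h
    have hss2 : 2 ≤ countStar T := by omega
    -- a second star, to the left of i
    obtain ⟨j, hjmem, hjne⟩ := Finset.exists_mem_ne
      (by rw [← countStar]; omega : 1 < (Finset.univ.filter fun l => T l = Letter.star).card) i
    have hjstar : T j = Letter.star := (Finset.mem_filter.mp hjmem).2
    have hjlt : j < i := by
      rcases lt_trichotomy j i with h | h | h
      · exact h
      · exact absurd h hjne
      · exact absurd hjstar (hiR j h)
    have hTi' : Function.update T i Letter.one i = Letter.one :=
      Function.update_self i Letter.one T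
    have hTj' : Function.update T i Letter.one j = Letter.star := by
      rw [Function.update_of_ne hjne]; exact hjstar
    have hstar' : hasStar (Function.update T i Letter.one) := ⟨j, hTj'⟩
    refine ⟨Or.inr ⟨by omega, by omega⟩, ⟨by omega, ?_, by omega, by omega, ?_⟩, ?_⟩
    · -- OneRight T'
      refine ⟨hstar', i, hTi', fun l hl => ?_⟩
      rw [Function.update_of_ne (Fin.ne_of_gt hl)]
      exact hiR l hl
    · -- NoZeroLeft T'
      refine ⟨hstar', fun l hl => ?_⟩
      have hlne : l ≠ i := by
        intro h; rw [h, hTi'] at hl; exact Letter.noConfusion hl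
      rw [Function.update_of_ne hlne] at hl
      obtain ⟨m, hm, hms⟩ := hNZL.2 l hl
      by_cases hmi : m = i
      · exact ⟨j, lt_trans hjlt (hmi ▸ hm), hTj'⟩
      · exact ⟨m, hm, by rw [Function.update_of_ne hmi]; exact hms⟩
    · -- Apply1 T' T
      refine ⟨i, ⟨hTi', fun l hl => ?_⟩, ?_⟩
      · rw [Function.update_of_ne (Fin.ne_of_gt hl)]
        intro hone
        obtain ⟨m, hm, hms⟩ := hNOR.2 l hone
        exact hiR m (lt_trans hl hm) hms
      · rw [Function.update_idem, ← hi_star, Function.update_eq_self]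
end

section
/- Rules (3) and (4) are inverses: if S is a face sequence of type 3 and S′ is the result of applying rule (3) to S, then S′ is a face sequence of type 4 and applying rule (4) to S′ returns S; conversely, if T is a face sequence of type 4 and T′ is the result of applying rule (4) to T, then T′ is of type 3 and applying rule (3) to T′ returns T. -/
set_option linter.unusedVariables false

section Helpers

open Finset

variable {n : ℕ}

/-- Generic letter count. -/
def countL (c : Letter) (S : FSeq n) : ℕ := (Finset.univ.filter fun i => S i = c).card

lemma count0_eq (S : FSeq n) : count0 S = countL Letter.zero S := rfl
lemma count1_eq (S : FSeq n) : count1 S = countL Letter.one S := rfl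
lemma countStar_eq (S : FSeq n) : countStar S = countL Letter.star S := rfl

lemma counts_sum (S : FSeq n) : count0 S + count1 S + countStar S = n := by
  classical
  simp only [count0, count1, countStar, Finset.card_filter]
  rw [← Finset.sum_add_distrib, ← Finset.sum_add_distrib]
  have : ∀ i ∈ Finset.univ (α := Fin n),
      ((if S i = Letter.zero then 1 else 0) + (if S i = Letter.one then 1 else 0) +
        if S i = Letter.star then 1 else 0) = 1 := by
    intro i _
    cases h : S i <;> simp
  rw [Finset.sum_congr rfl this]
  simp

lemma countL_update_del (S : FSeq n) (i : Fin n) (b c : Letter) (hb : b ≠ c) (hS : S i = c) :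
    countL c (Function.update S i b) + 1 = countL c S := by
  classical
  unfold countL
  have key : (Finset.univ.filter fun j => Function.update S i b j = c)
      = (Finset.univ.filter fun j => S j = c).erase i := by
    ext j
    by_cases h : j = i <;> simp [Function.update_apply, h, hS, hb]
  rw [key, Finset.card_erase_of_mem (by simp [hS])]
  have : i ∈ Finset.univ.filter fun j => S j = c := by simp [hS]
  have := Finset.card_pos.mpr ⟨i, this⟩
  omega

lemma countL_update_add (S : FSeq n) (i : Fin n) (c : Letter) (hS : S i ≠ c) :
    countL c (Function.update S i c) = countL c S + 1 := by
  classical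
  unfold countL
  have key : (Finset.univ.filter fun j => Function.update S i c j = c)
      = insert i (Finset.univ.filter fun j => S j = c) := by
    ext j
    by_cases h : j = i <;> simp [Function.update_apply, h]
  rw [key, Finset.card_insert_of_notMem (by simp [hS])]

lemma countL_update_other (S : FSeq n) (i : Fin n) (b c : Letter) (hb : b ≠ c) (hS : S i ≠ c) :
    countL c (Function.update S i b) = countL c S := by
  classical
  unfold countL
  congr 1
  ext j
  by_cases h : j = i <;> simp [Function.update_apply, h, hS, hb]

lemma exists_star_of_pos (S : FSeq n) (h : 0 < countStar S) : hasStar S := by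
  classical
  obtain ⟨i, hi⟩ := Finset.card_pos.mp h
  exact ⟨i, (Finset.mem_filter.mp hi).2⟩

end Helpers

/-- **Rules (3) and (4) are inverses of each other.** -/
theorem rule3_rule4_inverse (n k m0 m1 : ℕ) (hk1 : 1 ≤ k) (hk2 : k ≤ n - 1)
    (hm0 : m0 + k + 1 ≤ n) (hm1l : 1 ≤ m1) (hm1u : m1 + 1 ≤ k) :
    (∀ S S' : FSeq n, FaceSeq k S → Type3 k S → Apply3 S S' →
      FaceSeq k S' ∧ Type4 k S' ∧ Apply4 S' S) ∧
    (∀ T T' : FSeq n, FaceSeq k T → Type4 k T → Apply4 T T' →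
      FaceSeq k T' ∧ Type3 k T' ∧ Apply3 T' T) := by
  constructor
  · rintro S S' hFS ⟨h1, h0, hNOR, hZL⟩ ⟨i, ⟨hiz, hizmin⟩, rfl⟩
    have hsum := counts_sum S
    -- counts of S' = update S i star
    have hc0 : count0 (Function.update S i Letter.star) + 1 = count0 S := by
      simpa [count0_eq] using
        countL_update_del S i Letter.star Letter.zero (by simp) hiz
    have hc1 : count1 (Function.update S i Letter.star) = count1 S := by
      simpa [count1_eq] using
        countL_update_other S i Letter.star Letter.one (by simp) (by simp [hiz])
    have hcs : countStar (Function.update S i Letter.star) = countStar S + 1 := by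
      simpa [countStar_eq] using
        countL_update_add S i Letter.star (by simp [hiz])
    have hstar' : (Function.update S i Letter.star) i = Letter.star := by simp
    -- the leftmost zero is left of (or equal to) the zero witnessing ZeroLeft
    obtain ⟨_, p, hpz, hpmin⟩ := hZL
    have hip : i ≤ p := by
      by_contra h
      exact hizmin p (by omega) hpz
    have hNZL' : NoZeroLeft (Function.update S i Letter.star) := by
      refine ⟨⟨i, hstar'⟩, fun j hj => ?_⟩
      have hji : j ≠ i := by
        intro h; rw [h, hstar'] at hj; exact Letter.noConfusion hj
      have hSj : S j = Letter.zero := by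
        rwa [Function.update_apply, if_neg hji] at hj
      have : ¬ (j < i) := fun h => hizmin j h hSj
      exact ⟨i, by omega, hstar'⟩
    have hNOR' : NoOneRight (Function.update S i Letter.star) := by
      refine ⟨⟨i, hstar'⟩, fun j hj => ?_⟩
      have hji : j ≠ i := by
        intro h; rw [h, hstar'] at hj; exact Letter.noConfusion hj
      have hSj : S j = Letter.one := by
        rwa [Function.update_apply, if_neg hji] at hj
      obtain ⟨j', hjj', hj's⟩ := hNOR.2 j hSj
      refine ⟨j', hjj', ?_⟩
      rw [Function.update_apply]
      split <;> simp [hj's]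
    refine ⟨?_, ⟨by omega, by omega, hNOR', hNZL'⟩, ?_⟩
    · right; constructor <;> omega
    · refine ⟨i, ⟨hstar', fun j hj => ?_⟩, ?_⟩
      · rw [Function.update_apply, if_neg (by omega : j ≠ i)]
        exact hpmin j (by omega)
      · funext j
        rw [Function.update_idem]
        by_cases h : j = i
        · subst h; simp [hiz]
        · simp [Function.update_apply, h]
  · rintro T T' hFT ⟨h1, h0, hNOR, hNZL⟩ ⟨i, ⟨his, hismin⟩, rfl⟩
    have hsum := counts_sum T
    have hc0 : count0 (Function.update T i Letter.zero) = count0 T + 1 := by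
      simpa [count0_eq] using
        countL_update_add T i Letter.zero (by simp [his])
    have hc1 : count1 (Function.update T i Letter.zero) = count1 T := by
      simpa [count1_eq] using
        countL_update_other T i Letter.zero Letter.one (by simp) (by simp [his])
    have hcs : countStar (Function.update T i Letter.zero) + 1 = countStar T := by
      simpa [countStar_eq] using
        countL_update_del T i Letter.zero Letter.star (by simp) his
    have hstars : 3 ≤ countStar T := by omega
    -- a star other than i, necessarily right of i
    have hq : ∃ q : Fin n, T q = Letter.star ∧ i < q := by
      classical
      have hcard : 1 < (Finset.univ.filter fun j => T j = Letter.star).card := by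
        have : countStar T = (Finset.univ.filter fun j => T j = Letter.star).card := rfl
        omega
      obtain ⟨q, hqmem, hqi⟩ := Finset.exists_mem_ne hcard i
      have hqs : T q = Letter.star := (Finset.mem_filter.mp hqmem).2
      have : ¬ (q < i) := fun h => hismin q h hqs
      exact ⟨q, hqs, by omega⟩
    obtain ⟨q, hqs, hiq⟩ := hq
    have hq' : Function.update T i Letter.zero q = Letter.star := by
      rw [Function.update_apply, if_neg (by omega : q ≠ i)]; exact hqs
    have hiz' : (Function.update T i Letter.zero) i = Letter.zero := by simp
    have hNOR' : NoOneRight (Function.update T i Letter.zero) := by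
      refine ⟨⟨q, hq'⟩, fun j hj => ?_⟩
      have hji : j ≠ i := by
        intro h; rw [h, hiz'] at hj; exact Letter.noConfusion hj
      have hTj : T j = Letter.one := by
        rwa [Function.update_apply, if_neg hji] at hj
      obtain ⟨j', hjj', hj's⟩ := hNOR.2 j hTj
      by_cases h : j' = i
      · exact ⟨q, by omega, hq'⟩
      · refine ⟨j', hjj', ?_⟩
        rw [Function.update_apply, if_neg h]; exact hj's
    have hZL' : ZeroLeft (Function.update T i Letter.zero) := by
      refine ⟨⟨q, hq'⟩, i, hiz', fun j hj => ?_⟩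
      rw [Function.update_apply, if_neg (by omega : j ≠ i)]
      exact hismin j hj
    refine ⟨?_, ⟨by omega, by omega, hNOR', hZL'⟩, ?_⟩
    · right; constructor <;> omega
    · refine ⟨i, ⟨hiz', fun j hj => ?_⟩, ?_⟩
      · rw [Function.update_apply, if_neg (by omega : j ≠ i)]
        intro hTj
        obtain ⟨j', hj'j, hj's⟩ := hNZL.2 j hTj
        exact hismin j' (by omega) hj's
      · funext j
        rw [Function.update_idem]
        by_cases h : j = i
        · subst h; simp [his]
        · simp [Function.update_apply, h]
end
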